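/- Let I be an ideal of R{x̄}_{D*} with characteristic set 𝒞. Then for every c ∈ 𝒞, the initial I_c does not belong to I. -/

import Mathlib

open MvPolynomial
open scoped BigOperators

/-- The variables `dᶿxⱼ` of the `D*`-polynomial ring in `n` indeterminates with `M`
operators: a pair (index of `x`, multi-exponent `θ ∈ ℕ^M`). -/
abbrev DVar (n M : ℕ) : Type := Fin n × (Fin M → ℕ)

/-- Applying the composite operator with multi-exponent `φ` to a variable. -/
def shiftVar {n M : ℕ} (u : DVar n M) (φ : Fin M → ℕ) : DVar n M :=
  (u.1, fun l => u.2 l + φ l)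

/-- `φ` encodes a composition of the associated endomorphisms only (a `σ`-transform). -/
def IsSigmaExp {M : ℕ} (σset : Finset (Fin M)) (φ : Fin M → ℕ) : Prop :=
  ∀ k, φ k ≠ 0 → k ∈ σset

/-- `φ` encodes a composition of operators involving at least one derivation-type
operator (a `δ`-transform). -/
def IsDeltaExp {M : ℕ} (σset : Finset (Fin M)) (φ : Fin M → ℕ) : Prop :=
  ∃ k, k ∉ σset ∧ φ k ≠ 0

/-- `u` is the leader of `f`: the highest-ranked variable occurring in `f`. -/
def IsLeader {R : Type} [CommRing R] {n M : ℕ} (lt : DVar n M → DVar n M → Prop)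
    (f : MvPolynomial (DVar n M) R) (u : DVar n M) : Prop :=
  u ∈ f.vars ∧ ∀ v ∈ f.vars, v ≠ u → lt v u

/-- `f` lies in (the image of) `R`, i.e. is a constant polynomial. -/
def IsConst {R : Type} [CommRing R] {n M : ℕ} (f : MvPolynomial (DVar n M) R) : Prop :=
  ∃ r : R, f = C r

/-- `g` is reduced with respect to `f`: `g` contains no `δ`-transform of the leader of
`f`, and every `σ`-transform of the leader of `f` occurs in `g` with degree `< deg f`. -/
def ReducedWrt {R : Type} [CommRing R] {n M : ℕ} (lt : DVar n M → DVar n M → Prop)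
    (σset : Finset (Fin M)) (g f : MvPolynomial (DVar n M) R) : Prop :=
  ∀ u : DVar n M, IsLeader lt f u →
    (∀ φ : Fin M → ℕ, IsDeltaExp σset φ → shiftVar u φ ∉ g.vars) ∧
    (∀ φ : Fin M → ℕ, IsSigmaExp σset φ →
      degreeOf (shiftVar u φ) g < degreeOf u f)

/-- `g` is reduced with respect to every element of `A`. -/
def ReducedWrtSet {R : Type} [CommRing R] {n M : ℕ} (lt : DVar n M → DVar n M → Prop)
    (σset : Finset (Fin M)) (g : MvPolynomial (DVar n M) R)
    (A : Set (MvPolynomial (DVar n M) R)) : Prop :=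
  ∀ f ∈ A, ReducedWrt lt σset g f

/-- `A` is autoreduced: no element is constant and any two distinct elements are reduced
with respect to each other. -/
def Autoreduced {R : Type} [CommRing R] {n M : ℕ} (lt : DVar n M → DVar n M → Prop)
    (σset : Finset (Fin M)) (A : Set (MvPolynomial (DVar n M) R)) : Prop :=
  (∀ f ∈ A, ¬ IsConst f) ∧
  ∀ f ∈ A, ∀ g ∈ A, f ≠ g → ReducedWrt lt σset g f

/-- `rk f < rk g`: the leader of `f` is below that of `g`, or they coincide and the
leading degree of `f` is smaller. -/
def RkLt {R : Type} [CommRing R] {n M : ℕ} (lt : DVar n M → DVar n M → Prop)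
    (f g : MvPolynomial (DVar n M) R) : Prop :=
  ∃ uf ug, IsLeader lt f uf ∧ IsLeader lt g ug ∧
    (lt uf ug ∨ (uf = ug ∧ degreeOf uf f < degreeOf ug g))

/-- `rk f = rk g`: same leader and same leading degree. -/
def RkEq {R : Type} [CommRing R] {n M : ℕ} (lt : DVar n M → DVar n M → Prop)
    (f g : MvPolynomial (DVar n M) R) : Prop :=
  ∃ uf ug, IsLeader lt f uf ∧ IsLeader lt g ug ∧ uf = ug ∧
    degreeOf uf f = degreeOf ug g

/-- `rk f ≤ rk g` (with constants of lowest rank). -/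
def RkLe {R : Type} [CommRing R] {n M : ℕ} (lt : DVar n M → DVar n M → Prop)
    (f g : MvPolynomial (DVar n M) R) : Prop :=
  IsConst f ∨ RkLt lt f g ∨ RkEq lt f g

/-- `lt` is a ranking of the variables, with `σ`-operators `σset` and operator ranks `ν`. -/
structure IsRanking {n M : ℕ} (lt : DVar n M → DVar n M → Prop)
    (σset : Finset (Fin M)) (ν : Fin M → ℕ) : Prop where
  trichot : ∀ u v, lt u v ∨ u = v ∨ lt v u
  irrefl : ∀ u, ¬ lt u u
  trans : ∀ u v w, lt u v → lt v w → lt u w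
  wf : WellFounded lt
  lt_op : ∀ (u : DVar n M) (k : Fin M), lt u (shiftVar u (Pi.single k 1))
  mono : ∀ (u v : DVar n M) (k : Fin M), lt u v →
    lt (shiftVar u (Pi.single k 1)) (shiftVar v (Pi.single k 1))
  op_ord : ∀ (u : DVar n M) (k k' : Fin M), ν k < ν k' →
    lt (shiftVar u (Pi.single k 1)) (shiftVar u (Pi.single k' 1))
  nu_sigma : ∀ k ∈ σset, ν k = 0

/-- Lexicographic comparison of two rank-sorted lists of `D*`-polynomials. -/
def PrecList {R : Type} [CommRing R] {n M : ℕ} (lt : DVar n M → DVar n M → Prop)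
    (la lb : List (MvPolynomial (DVar n M) R)) : Prop :=
  (∃ i : ℕ, i < la.length ∧ i < lb.length ∧
      RkLt lt (la.getD i 0) (lb.getD i 0) ∧
      ∀ j < i, RkEq lt (la.getD j 0) (lb.getD j 0)) ∨
  (lb.length < la.length ∧ ∀ i < lb.length, RkEq lt (la.getD i 0) (lb.getD i 0))

/-- The pre-order `A ≺ B` on autoreduced (finite) sets of `D*`-polynomials. -/
def Prec {R : Type} [CommRing R] {n M : ℕ} (lt : DVar n M → DVar n M → Prop)
    (A B : Finset (MvPolynomial (DVar n M) R)) : Prop :=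
  ∃ la lb : List (MvPolynomial (DVar n M) R),
    la.Nodup ∧ lb.Nodup ∧ (∀ f, f ∈ la ↔ f ∈ A) ∧ (∀ f, f ∈ lb ↔ f ∈ B) ∧
    la.Pairwise (RkLt lt) ∧ lb.Pairwise (RkLt lt) ∧ PrecList lt la lb

/-- The initial of `f` with respect to the variable `u`: the leading coefficient of `f`
viewed as a univariate polynomial in `u`. -/
noncomputable def initialOf {R : Type} [CommRing R] {n M : ℕ} (u : DVar n M)
    (f : MvPolynomial (DVar n M) R) : MvPolynomial (DVar n M) R :=
  ∑ d ∈ f.support.filter (fun d => d u = degreeOf u f),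
    monomial (d.erase u) (coeff d f)

/-- `𝒞` is a characteristic set of the ideal `I`: a minimal element (for `≺`) of the
collection of autoreduced subsets `A ⊆ I` with `s_f ∉ I` for all `f ∈ A`. -/
def IsCharSet {R : Type} [CommRing R] {n M : ℕ} (lt : DVar n M → DVar n M → Prop)
    (σset : Finset (Fin M)) (I : Ideal (MvPolynomial (DVar n M) R))
    (𝒞 : Finset (MvPolynomial (DVar n M) R)) : Prop :=
  (Autoreduced lt σset (𝒞 : Set (MvPolynomial (DVar n M) R)) ∧
    (𝒞 : Set (MvPolynomial (DVar n M) R)) ⊆ (I : Set (MvPolynomial (DVar n M) R)) ∧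
    ∀ f ∈ 𝒞, ∀ u : DVar n M, IsLeader lt f u → pderiv u f ∉ I) ∧
  ∀ B : Finset (MvPolynomial (DVar n M) R),
    Autoreduced lt σset (B : Set (MvPolynomial (DVar n M) R)) →
    (B : Set (MvPolynomial (DVar n M) R)) ⊆ (I : Set (MvPolynomial (DVar n M) R)) →
    (∀ f ∈ B, ∀ u : DVar n M, IsLeader lt f u → pderiv u f ∉ I) →
    ¬ Prec lt B 𝒞

section Helpers

variable {R : Type} [CommRing R] {n M : ℕ}

theorem shiftVar_zero (u : DVar n M) : shiftVar u 0 = u := by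
  simp [shiftVar]

theorem shiftVar_shiftVar (u : DVar n M) (a b : Fin M → ℕ) :
    shiftVar (shiftVar u a) b = shiftVar u (a + b) := by
  simp only [shiftVar, Prod.mk.injEq, true_and]
  funext l; simp [add_assoc]

theorem lt_shiftVar {lt : DVar n M → DVar n M → Prop} {σset : Finset (Fin M)} {ν : Fin M → ℕ}
    (hrank : IsRanking lt σset ν) (u : DVar n M) (φ : Fin M → ℕ) (hφ : φ ≠ 0) :
    lt u (shiftVar u φ) := by
  classical
  obtain ⟨N, hN⟩ : ∃ N, (∑ k, φ k) = N := ⟨_, rfl⟩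
  induction N using Nat.strong_induction_on generalizing φ with
  | _ N ih =>
    obtain ⟨k, hk⟩ : ∃ k, φ k ≠ 0 := by
      by_contra h
      push_neg at h
      exact hφ (funext fun k => h k)
    set ψ : Fin M → ℕ := φ - Pi.single k 1 with hψdef
    have hφeq : φ = ψ + Pi.single k 1 := by
      funext l
      simp only [hψdef, Pi.add_apply, Pi.sub_apply]
      by_cases hl : l = k
      · subst hl; simp only [Pi.single_eq_same]; omega
      · simp [Pi.single_eq_of_ne hl]
    have hstep : lt (shiftVar u ψ) (shiftVar u φ) := by
      have := hrank.lt_op (shiftVar u ψ) k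
      rwa [shiftVar_shiftVar, ← hφeq] at this
    by_cases hψ : ψ = 0
    · rwa [hψ, shiftVar_zero] at hstep
    · have hsum : (∑ l, ψ l) < N := by
        rw [← hN]
        have h1 : ∀ l, ψ l ≤ φ l := by
          intro l; simp only [hψdef, Pi.sub_apply]; omega
        have h2 : ψ k < φ k := by
          simp only [hψdef, Pi.sub_apply, Pi.single_eq_same]; omega
        exact Finset.sum_lt_sum (fun l _ => h1 l) ⟨k, Finset.mem_univ k, h2⟩
      exact hrank.trans _ _ _ (ih _ hsum ψ hψ rfl) hstep

theorem leader_unique {lt : DVar n M → DVar n M → Prop} {σset : Finset (Fin M)} {ν : Fin M → ℕ}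
    (hrank : IsRanking lt σset ν) {f : MvPolynomial (DVar n M) R} {u v : DVar n M}
    (hu : IsLeader lt f u) (hv : IsLeader lt f v) : u = v := by
  by_contra hne
  have h1 : lt v u := hu.2 v hv.1 (fun h => hne h.symm)
  have h2 : lt u v := hv.2 u hu.1 hne
  exact hrank.irrefl u (hrank.trans _ _ _ h2 h1)

end Helpers
section Helpers2

variable {R : Type} [CommRing R] {n M : ℕ}

theorem finset_exists_max {lt : DVar n M → DVar n M → Prop} {σset : Finset (Fin M)} {ν : Fin M → ℕ}
    (hrank : IsRanking lt σset ν) (s : Finset (DVar n M)) (hs : s.Nonempty) :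
    ∃ m ∈ s, ∀ v ∈ s, v ≠ m → lt v m := by
  classical
  induction s using Finset.induction_on with
  | empty => exact absurd hs (by simp)
  | @insert a s ha ih =>
    rcases s.eq_empty_or_nonempty with rfl | hne
    · exact ⟨a, by simp, by intro v hv hvne; simp at hv; exact absurd hv hvne⟩
    · obtain ⟨m, hm, hmax⟩ := ih hne
      rcases hrank.trichot a m with h | h | h
      · refine ⟨m, Finset.mem_insert_of_mem hm, ?_⟩
        intro v hv hvne
        rcases Finset.mem_insert.1 hv with rfl | hv'
        · exact h
        · exact hmax v hv' hvne
      · subst h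
        exact ⟨a, Finset.mem_insert_self _ _, fun v hv hvne =>
          hmax v (by rcases Finset.mem_insert.1 hv with rfl | h' <;> [exact absurd rfl hvne; exact h']) hvne⟩
      · refine ⟨a, Finset.mem_insert_self _ _, ?_⟩
        intro v hv hvne
        rcases Finset.mem_insert.1 hv with rfl | hv'
        · exact absurd rfl hvne
        · by_cases hvm : v = m
          · subst hvm; exact h
          · exact hrank.trans _ _ _ (hmax v hv' hvm) h

theorem eq_C_of_vars_empty {f : MvPolynomial (DVar n M) R} (h : f.vars = ∅) : IsConst f := by
  classical
  refine ⟨f.coeff 0, ?_⟩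
  apply MvPolynomial.ext
  intro m
  by_cases hm : m = 0
  · subst hm; simp
  · rw [MvPolynomial.coeff_C, if_neg (fun hh => hm hh.symm)]
    by_cases hms : m ∈ f.support
    · obtain ⟨w, hw⟩ : ∃ w, w ∈ m.support := by
        rcases Finsupp.support_nonempty_iff.2 hm with ⟨w, hw⟩
        exact ⟨w, hw⟩
      have : w ∈ f.vars := (MvPolynomial.mem_vars w).2 ⟨m, hms, hw⟩
      rw [h] at this
      exact absurd this (by simp)
    · simpa using (MvPolynomial.notMem_support_iff.1 hms)

theorem exists_leader {lt : DVar n M → DVar n M → Prop} {σset : Finset (Fin M)} {ν : Fin M → ℕ}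
    (hrank : IsRanking lt σset ν) {f : MvPolynomial (DVar n M) R} (hf : ¬ IsConst f) :
    ∃ u, IsLeader lt f u := by
  have hvars : f.vars.Nonempty := by
    rcases Finset.eq_empty_or_nonempty f.vars with h | h
    · exact absurd (eq_C_of_vars_empty h) hf
    · exact h
  obtain ⟨m, hm, hmax⟩ := finset_exists_max hrank f.vars hvars
  exact ⟨m, hm, hmax⟩

theorem degreeOf_pos_of_mem_vars {f : MvPolynomial (DVar n M) R} {u : DVar n M}
    (h : u ∈ f.vars) : 0 < MvPolynomial.degreeOf u f := by
  classical
  obtain ⟨m, hm, hum⟩ := (MvPolynomial.mem_vars u).1 h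
  have h1 : m u ≠ 0 := Finsupp.mem_support_iff.1 hum
  have h2 := MvPolynomial.monomial_le_degreeOf u hm
  omega

theorem degreeOf_eq_zero_of_not_mem_vars {f : MvPolynomial (DVar n M) R} {u : DVar n M}
    (h : u ∉ f.vars) : MvPolynomial.degreeOf u f = 0 := by
  classical
  rw [MvPolynomial.degreeOf_eq_sup]
  refine Nat.le_zero.1 (Finset.sup_le ?_)
  intro m hm
  by_contra hmu
  exact h ((MvPolynomial.mem_vars u).2 ⟨m, hm, Finsupp.mem_support_iff.2 (by omega)⟩)

end Helpers2
section Helpers3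

variable {R : Type} [CommRing R] {n M : ℕ}
variable {lt : DVar n M → DVar n M → Prop} {σset : Finset (Fin M)} {ν : Fin M → ℕ}

theorem RkLt_irrefl (hrank : IsRanking lt σset ν) (f : MvPolynomial (DVar n M) R) :
    ¬ RkLt lt f f := by
  rintro ⟨uf, ug, hf, hg, h | ⟨heq, hdeg⟩⟩
  · rw [leader_unique hrank hf hg] at h
    exact hrank.irrefl _ h
  · rw [leader_unique hrank hf hg] at hdeg
    exact lt_irrefl _ hdeg

theorem RkLt_trans (hrank : IsRanking lt σset ν) {f g h : MvPolynomial (DVar n M) R}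
    (h1 : RkLt lt f g) (h2 : RkLt lt g h) : RkLt lt f h := by
  obtain ⟨uf, ug, hf, hg, hc1⟩ := h1
  obtain ⟨ug', uh, hg', hh, hc2⟩ := h2
  rw [leader_unique hrank hg' hg] at hc2
  refine ⟨uf, uh, hf, hh, ?_⟩
  rcases hc1 with h1' | ⟨rfl, hd1⟩ <;> rcases hc2 with h2' | ⟨rfl, hd2⟩
  · exact Or.inl (hrank.trans _ _ _ h1' h2')
  · exact Or.inl h1'
  · exact Or.inl h2'
  · exact Or.inr ⟨rfl, lt_trans hd1 hd2⟩

theorem RkEq_refl (hrank : IsRanking lt σset ν) {f : MvPolynomial (DVar n M) R}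
    {u : DVar n M} (hu : IsLeader lt f u) : RkEq lt f f :=
  ⟨u, u, hu, hu, rfl, rfl⟩

theorem Rk_trichot (hrank : IsRanking lt σset ν) {f g : MvPolynomial (DVar n M) R}
    {uf ug : DVar n M} (hf : IsLeader lt f uf) (hg : IsLeader lt g ug) :
    RkLt lt f g ∨ RkEq lt f g ∨ RkLt lt g f := by
  rcases hrank.trichot uf ug with h | h | h
  · exact Or.inl ⟨uf, ug, hf, hg, Or.inl h⟩
  · subst h
    rcases lt_trichotomy (MvPolynomial.degreeOf uf f) (MvPolynomial.degreeOf uf g) with h' | h' | h'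
    · exact Or.inl ⟨uf, uf, hf, hg, Or.inr ⟨rfl, h'⟩⟩
    · exact Or.inr (Or.inl ⟨uf, uf, hf, hg, rfl, h'⟩)
    · exact Or.inr (Or.inr ⟨uf, uf, hg, hf, Or.inr ⟨rfl, h'⟩⟩)
  · exact Or.inr (Or.inr ⟨ug, uf, hg, hf, Or.inl h⟩)

/-- Existence of a list sorted by a transitive relation that is total on the finset. -/
theorem exists_sorted_list {α : Type*} (r : α → α → Prop) (htrans : ∀ a b c, r a b → r b c → r a c)
    (s : Finset α) (htot : ∀ a ∈ s, ∀ b ∈ s, a ≠ b → r a b ∨ r b a) :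
    ∃ l : List α, l.Nodup ∧ (∀ f, f ∈ l ↔ f ∈ s) ∧ l.Pairwise r := by
  classical
  obtain ⟨N, hN⟩ : ∃ N, s.card = N := ⟨_, rfl⟩
  induction N generalizing s with
  | zero =>
    rw [Finset.card_eq_zero] at hN
    subst hN
    exact ⟨[], by simp, by simp, by simp⟩
  | succ N ih =>
    have hne : s.Nonempty := Finset.card_pos.1 (by omega)
    -- minimal element
    have hmin : ∃ m ∈ s, ∀ b ∈ s, b ≠ m → r m b := by
      clear ih hN
      induction s using Finset.induction_on with
      | empty => exact absurd hne (by simp)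
      | @insert a s ha ih2 =>
        rcases s.eq_empty_or_nonempty with rfl | hne'
        · exact ⟨a, by simp, by intro v hv hvne; simp at hv; exact absurd hv hvne⟩
        · obtain ⟨m, hm, hmax⟩ := ih2 (fun x hx y hy => htot x (Finset.mem_insert_of_mem hx) y
            (Finset.mem_insert_of_mem hy)) hne'
          by_cases ham : a = m
          · subst ham
            exact ⟨a, Finset.mem_insert_self _ _, fun v hv hvne =>
              hmax v (by rcases Finset.mem_insert.1 hv with rfl | h' <;>
                [exact absurd rfl hvne; exact h']) hvne⟩
          · rcases htot a (Finset.mem_insert_self _ _) m (Finset.mem_insert_of_mem hm) ham with h | h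
            · refine ⟨a, Finset.mem_insert_self _ _, ?_⟩
              intro v hv hvne
              rcases Finset.mem_insert.1 hv with rfl | hv'
              · exact absurd rfl hvne
              · by_cases hvm : v = m
                · subst hvm; exact h
                · exact htrans _ _ _ h (hmax v hv' hvm)
            · refine ⟨m, Finset.mem_insert_of_mem hm, ?_⟩
              intro v hv hvne
              rcases Finset.mem_insert.1 hv with rfl | hv'
              · exact h
              · exact hmax v hv' hvne
    obtain ⟨m, hm, hmax⟩ := hmin
    obtain ⟨l', hnd, hmem, hpw⟩ := ih (s.erase m)
      (fun a ha b hb => htot a (Finset.mem_of_mem_erase ha) b (Finset.mem_of_mem_erase hb))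
      (by rw [Finset.card_erase_of_mem hm, hN]; omega)
    refine ⟨m :: l', ?_, ?_, ?_⟩
    · refine List.nodup_cons.2 ⟨fun h => ?_, hnd⟩
      exact (Finset.ne_of_mem_erase ((hmem m).1 h)) rfl
    · intro f
      simp only [List.mem_cons, hmem, Finset.mem_erase]
      constructor
      · rintro (rfl | ⟨_, h⟩) <;> [exact hm; exact h]
      · intro hf
        by_cases hfm : f = m
        · exact Or.inl hfm
        · exact Or.inr ⟨hfm, hf⟩
    · refine List.pairwise_cons.2 ⟨?_, hpw⟩
      intro b hb
      have := (hmem b).1 hb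
      exact hmax b (Finset.mem_of_mem_erase this) (Finset.ne_of_mem_erase this)

end Helpers3
section Helpers4

variable {R : Type} [CommRing R] {n M : ℕ}

open MvPolynomial

theorem topPart_eq (u : DVar n M) (c : MvPolynomial (DVar n M) R) :
    initialOf u c * X u ^ (degreeOf u c) =
      ∑ m ∈ c.support.filter (fun m => m u = degreeOf u c), monomial m (coeff m c) := by
  classical
  rw [initialOf, Finset.sum_mul]
  refine Finset.sum_congr rfl ?_
  intro m hm
  rw [Finset.mem_filter] at hm
  rw [X_pow_eq_monomial, monomial_mul, mul_one]
  congr 1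
  conv_rhs => rw [← Finsupp.erase_add_single u m]
  rw [hm.2]

theorem coeff_topPart (u : DVar n M) (c : MvPolynomial (DVar n M) R) (m : (DVar n M) →₀ ℕ) :
    coeff m (initialOf u c * X u ^ (degreeOf u c)) =
      if m u = degreeOf u c then coeff m c else 0 := by
  classical
  rw [topPart_eq, coeff_sum]
  simp only [coeff_monomial]
  rw [Finset.sum_ite_eq' (Finset.filter (fun m => m u = degreeOf u c) c.support) m (fun x => coeff x c)]
  by_cases h1 : m u = degreeOf u c
  · by_cases h2 : m ∈ c.support
    · simp [Finset.mem_filter, h1, h2]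
    · simp [Finset.mem_filter, h1, h2, MvPolynomial.notMem_support_iff.1 h2]
  · simp [Finset.mem_filter, h1]

theorem coeff_tail (u : DVar n M) (c : MvPolynomial (DVar n M) R) (m : (DVar n M) →₀ ℕ) :
    coeff m (c - initialOf u c * X u ^ (degreeOf u c)) =
      if m u = degreeOf u c then 0 else coeff m c := by
  classical
  rw [coeff_sub, coeff_topPart]
  by_cases h : m u = degreeOf u c <;> simp [h]

end Helpers4
section Helpers5

variable {R : Type} [CommRing R] {n M : ℕ}

open MvPolynomial

theorem support_tail_subset (u : DVar n M) (c : MvPolynomial (DVar n M) R) :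
    (c - initialOf u c * X u ^ (degreeOf u c)).support ⊆ c.support := by
  intro m hm
  rw [mem_support_iff, coeff_tail] at hm
  rw [mem_support_iff]
  intro h
  by_cases h1 : m u = degreeOf u c <;> simp [h1, h] at hm

theorem degreeOf_tail_le (u w : DVar n M) (c : MvPolynomial (DVar n M) R) :
    degreeOf w (c - initialOf u c * X u ^ (degreeOf u c)) ≤ degreeOf w c := by
  classical
  rw [degreeOf_eq_sup w, degreeOf_eq_sup w]
  apply Finset.sup_mono
  exact support_tail_subset u c

theorem vars_tail_subset (u : DVar n M) (c : MvPolynomial (DVar n M) R) :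
    (c - initialOf u c * X u ^ (degreeOf u c)).vars ⊆ c.vars := by
  intro w hw
  obtain ⟨m, hm, hwm⟩ := (mem_vars w).1 hw
  exact (mem_vars w).2 ⟨m, support_tail_subset u c hm, hwm⟩

theorem degreeOf_tail_lt (u : DVar n M) (c : MvPolynomial (DVar n M) R)
    (hd : 0 < degreeOf u c) :
    degreeOf u (c - initialOf u c * X u ^ (degreeOf u c)) < degreeOf u c := by
  classical
  rw [degreeOf_lt_iff hd]
  intro m hm
  have h1 := support_tail_subset u c hm
  have h2 : m u ≠ degreeOf u c := by
    rw [mem_support_iff, coeff_tail] at hm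
    intro h
    simp [h] at hm
  have h3 := monomial_le_degreeOf u h1
  omega

theorem coeff_initialOf_ne_zero (u : DVar n M) (c : MvPolynomial (DVar n M) R)
    {m : (DVar n M) →₀ ℕ} (hm : m u ≠ 0) : coeff m (initialOf u c) = 0 := by
  classical
  rw [initialOf, coeff_sum]
  refine Finset.sum_eq_zero ?_
  intro m' hm'
  rw [coeff_monomial, if_neg]
  intro h
  apply hm
  rw [← h]
  simp

theorem pderiv_initialOf (u : DVar n M) (c : MvPolynomial (DVar n M) R) :
    pderiv u (initialOf u c) = 0 := by
  apply pderiv_eq_zero_of_notMem_vars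
  intro h
  obtain ⟨m, hm, hum⟩ := (mem_vars u).1 h
  exact (mem_support_iff.1 hm) (coeff_initialOf_ne_zero u c (Finsupp.mem_support_iff.1 hum))

theorem pderiv_topPart_mem {I : Ideal (MvPolynomial (DVar n M) R)} {u : DVar n M}
    {c : MvPolynomial (DVar n M) R} (hI : initialOf u c ∈ I) :
    pderiv u (initialOf u c * X u ^ (degreeOf u c)) ∈ I := by
  rw [pderiv_mul, pderiv_initialOf, zero_mul, zero_add]
  exact I.mul_mem_right _ hI

end Helpers5
/-- If `𝒞` is a characteristic set of an ideal `I` of the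
`D*`-polynomial ring, then the initial of every element of `𝒞` lies outside `I`. -/
theorem initial_not_mem_of_charSet {R : Type} [CommRing R] {n M : ℕ}
    (lt : DVar n M → DVar n M → Prop) (σset : Finset (Fin M)) (ν : Fin M → ℕ)
    (hrank : IsRanking lt σset ν)
    (I : Ideal (MvPolynomial (DVar n M) R))
    (𝒞 : Finset (MvPolynomial (DVar n M) R))
    (h𝒞 : IsCharSet lt σset I 𝒞) :
    ∀ c ∈ 𝒞, ∀ u : DVar n M, IsLeader lt c u → initialOf u c ∉ I := by
  classical
  obtain ⟨⟨hauto, hsub, hsep⟩, hmin⟩ := h𝒞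
  intro c hc u hu hIinI
  obtain ⟨ct, hct⟩ : ∃ ct, ct = c - initialOf u c * X u ^ (degreeOf u c) := ⟨_, rfl⟩
  have hcI : c ∈ I := hsub hc
  have hdpos : 0 < degreeOf u c := degreeOf_pos_of_mem_vars hu.1
  have hctI : ct ∈ I := by rw [hct]; exact I.sub_mem hcI (I.mul_mem_right _ hIinI)
  have hpdct : pderiv u ct ∉ I := by
    intro h
    apply hsep c hc u hu
    have hsplit : pderiv u c = pderiv u ct + pderiv u (initialOf u c * X u ^ (degreeOf u c)) := by
      rw [hct, map_sub]; ring
    rw [hsplit]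
    exact I.add_mem h (pderiv_topPart_mem hIinI)
  have huct : u ∈ ct.vars := by
    by_contra h
    exact hpdct (by rw [pderiv_eq_zero_of_notMem_vars h]; exact I.zero_mem)
  have hvarssub : ct.vars ⊆ c.vars := by rw [hct]; exact vars_tail_subset u c
  have hdegle : ∀ w, degreeOf w ct ≤ degreeOf w c := by
    intro w; rw [hct]; exact degreeOf_tail_le u w c
  have hctdeg : degreeOf u ct < degreeOf u c := by rw [hct]; exact degreeOf_tail_lt u c hdpos
  have hctlead : IsLeader lt ct u := ⟨huct, fun v hv hne => hu.2 v (hvarssub hv) hne⟩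
  have hctdpos : 0 < degreeOf u ct := degreeOf_pos_of_mem_vars huct
  have hctnotconst : ¬ IsConst ct := by
    rintro ⟨r, hr⟩
    rw [hr, vars_C] at huct
    exact absurd huct (Finset.notMem_empty u)
  have hncC : ∀ f ∈ 𝒞, ¬ IsConst f := hauto.1
  have hleadC : ∀ f ∈ 𝒞, ∃ v, IsLeader lt f v := fun f hf => exists_leader hrank (hncC f hf)
  -- no variable above the leader occurs
  have hnotinvars : ∀ (f : MvPolynomial (DVar n M) R) (w : DVar n M), IsLeader lt f w →
      ∀ x, lt w x → x ∉ f.vars := by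
    intro f w hw x hx hxf
    by_cases hxw : x = w
    · subst hxw; exact hrank.irrefl x hx
    · exact hrank.irrefl w (hrank.trans _ _ _ hx (hw.2 x hxf hxw))
  have hzeroSigma : IsSigmaExp σset (0 : Fin M → ℕ) := fun k hk => absurd rfl hk
  have hdeltane : ∀ φ : Fin M → ℕ, IsDeltaExp σset φ → φ ≠ 0 := by
    rintro φ ⟨k, _, hk⟩ h
    rw [h] at hk; exact hk rfl
  -- ct is reduced with respect to every element of 𝒞
  have hred : ∀ f ∈ 𝒞, ReducedWrt lt σset ct f := by
    intro f hf v hv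
    by_cases hfc : f = c
    · subst hfc
      have hvu : v = u := leader_unique hrank hv hu
      subst hvu
      refine ⟨?_, ?_⟩
      · intro φ hφ hmem
        exact hnotinvars f v hv _ (lt_shiftVar hrank v φ (hdeltane φ hφ)) (hvarssub hmem)
      · intro φ _
        by_cases hφ0 : φ = 0
        · subst hφ0; rw [shiftVar_zero]; exact hctdeg
        · have hnot : shiftVar v φ ∉ ct.vars := fun hmem =>
            hnotinvars f v hv _ (lt_shiftVar hrank v φ hφ0) (hvarssub hmem)
          rw [degreeOf_eq_zero_of_not_mem_vars hnot]
          exact hdpos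
    · have hcredf : ReducedWrt lt σset c f := hauto.2 f hf c hc hfc
      obtain ⟨hδ, hσ⟩ := hcredf v hv
      refine ⟨?_, ?_⟩
      · intro φ hφ hmem; exact hδ φ hφ (hvarssub hmem)
      · intro φ hφ; exact lt_of_le_of_lt (hdegle _) (hσ φ hφ)
  have hctnotC : ct ∉ 𝒞 := by
    intro h
    have h2 := (hred ct h u hctlead).2 0 hzeroSigma
    rw [shiftVar_zero] at h2
    exact lt_irrefl _ h2
  have hRkct : RkLt lt ct c := ⟨u, u, hctlead, hu, Or.inr ⟨rfl, hctdeg⟩⟩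
  -- RkLt is total on 𝒞
  have htot : ∀ a ∈ 𝒞, ∀ b ∈ 𝒞, a ≠ b → RkLt lt a b ∨ RkLt lt b a := by
    intro a ha b hb hab
    obtain ⟨va, hva⟩ := hleadC a ha
    obtain ⟨vb, hvb⟩ := hleadC b hb
    rcases Rk_trichot hrank hva hvb with h | h | h
    · exact Or.inl h
    · exfalso
      obtain ⟨wa, wb, hwa, hwb, heq, hdeg⟩ := h
      subst heq
      have hbred : ReducedWrt lt σset b a := hauto.2 a ha b hb hab
      have h2 := (hbred wa hwa).2 0 hzeroSigma
      rw [shiftVar_zero] at h2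
      omega
    · exact Or.inr h
  obtain ⟨lb, hlbnd, hlbmem, hlbpw⟩ := exists_sorted_list (RkLt lt)
    (fun _ _ _ h1 h2 => RkLt_trans hrank h1 h2) 𝒞 htot
  -- split lb at ct's rank
  let p : MvPolynomial (DVar n M) R → Bool := fun f => decide (RkLt lt f ct)
  obtain ⟨t, htdef⟩ : ∃ t, t = lb.takeWhile p := ⟨_, rfl⟩
  obtain ⟨la, hladef⟩ : ∃ la, la = t ++ [ct] := ⟨_, rfl⟩
  have htsub : List.Sublist t lb := by rw [htdef]; exact List.takeWhile_sublist p
  have htmem : ∀ f ∈ t, f ∈ 𝒞 ∧ RkLt lt f ct := by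
    intro f hf
    refine ⟨(hlbmem f).1 (htsub.subset hf), ?_⟩
    have := List.mem_takeWhile_imp (htdef ▸ hf)
    exact of_decide_eq_true this
  have hctnott : ct ∉ t := fun h => hctnotC (htmem ct h).1
  have htnd : t.Nodup := hlbnd.sublist htsub
  have htpw : t.Pairwise (RkLt lt) := hlbpw.sublist htsub
  have hland : la.Nodup := by
    rw [hladef, List.nodup_append]
    exact ⟨htnd, List.nodup_singleton _,
      fun a ha b hb hab => hctnott (by rw [List.mem_singleton.1 hb] at hab; rwa [hab] at ha)⟩
  have hlapw : la.Pairwise (RkLt lt) := by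
    rw [hladef, List.pairwise_append]
    exact ⟨htpw, List.pairwise_singleton _ _,
      fun x hx y hy => by rw [List.mem_singleton.1 hy]; exact (htmem x hx).2⟩
  have hklb : t.length < lb.length := by
    rcases lt_or_eq_of_le htsub.length_le with h | h
    · exact h
    · exfalso
      have : t = lb := htsub.eq_of_length h
      have hcmem : c ∈ t := this ▸ ((hlbmem c).2 hc)
      exact RkLt_irrefl hrank c (RkLt_trans hrank (htmem c hcmem).2 hRkct)
  -- decomposition of lb
  have hlbdec : lb = t ++ lb.dropWhile p := by rw [htdef, List.takeWhile_append_dropWhile]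
  have hdropne : lb.dropWhile p ≠ [] := by
    intro h
    rw [hlbdec, h, List.append_nil] at hklb
    exact lt_irrefl _ hklb
  have hb0p : p ((lb.dropWhile p).head hdropne) = false := List.head_dropWhile_not p hdropne
  set b₀ := (lb.dropWhile p).head hdropne with hb₀def
  have hb₀lb : b₀ ∈ lb := by
    rw [hlbdec]
    exact List.mem_append_right _ (List.head_mem hdropne)
  have hb₀𝒞 : b₀ ∈ 𝒞 := (hlbmem b₀).1 hb₀lb
  have hb₀not : ¬ RkLt lt b₀ ct := by
    intro h
    rw [show p b₀ = true from decide_eq_true h] at hb0p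
    cases hb0p
  have hRkctb₀ : RkLt lt ct b₀ := by
    obtain ⟨vb, hvb⟩ := hleadC b₀ hb₀𝒞
    rcases Rk_trichot hrank hvb hctlead with h | h | h
    · exact absurd h hb₀not
    · exfalso
      obtain ⟨w1, w2, hw1, hw2, heq, hdeg⟩ := h
      have hw2u : w2 = u := leader_unique hrank hw2 hctlead
      subst hw2u; subst heq
      have h2 := (hred b₀ hb₀𝒞 w1 hw1).2 0 hzeroSigma
      rw [shiftVar_zero] at h2
      omega
    · exact h
  -- getD computations
  have hgetla : la.getD t.length 0 = ct := by
    rw [hladef]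
    rw [List.getD_eq_getElem?_getD, List.getElem?_append_right (le_refl t.length)]
    simp
  have hgetlb : lb.getD t.length 0 = b₀ := by
    conv_lhs => rw [hlbdec]
    rw [List.getD_eq_getElem?_getD, List.getElem?_append_right (le_refl t.length)]
    simp only [Nat.sub_self]
    rw [List.getElem?_eq_getElem (by
      rw [hlbdec, List.length_append] at hklb
      omega)]
    rw [List.getElem_zero]
    simp [hb₀def]
  have hgetpre : ∀ j < t.length, la.getD j 0 = lb.getD j 0 ∧ la.getD j 0 ∈ 𝒞 := by
    intro j hj
    have h1 : la.getD j 0 = t.getD j 0 := by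
      rw [hladef, List.getD_eq_getElem?_getD, List.getElem?_append_left hj,
        ← List.getD_eq_getElem?_getD]
    have h2 : lb.getD j 0 = t.getD j 0 := by
      conv_lhs => rw [hlbdec]
      rw [List.getD_eq_getElem?_getD, List.getElem?_append_left hj, ← List.getD_eq_getElem?_getD]
    have h3 : t.getD j 0 ∈ t := by
      rw [List.getD_eq_getElem?_getD, List.getElem?_eq_getElem hj]
      exact List.getElem_mem hj
    exact ⟨h1.trans h2.symm, by rw [h1]; exact (htmem _ h3).1⟩
  -- the competing set B
  let B : Finset (MvPolynomial (DVar n M) R) := la.toFinset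
  have hBmem : ∀ f, f ∈ B ↔ (f ∈ t ∨ f = ct) := by
    intro f
    simp [B, hladef, List.mem_toFinset]
    exact or_comm
  have hBsetmem : ∀ f, f ∈ (B : Set (MvPolynomial (DVar n M) R)) ↔ (f ∈ t ∨ f = ct) := by
    intro f; rw [Finset.mem_coe]; exact hBmem f
  -- B is autoreduced
  have hBauto : Autoreduced lt σset (B : Set (MvPolynomial (DVar n M) R)) := by
    constructor
    · intro f hf
      rcases (hBsetmem f).1 hf with hf' | rfl
      · exact hncC f (htmem f hf').1
      · exact hctnotconst
    · intro f hf g hg hfg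
      rcases (hBsetmem f).1 hf with hf' | rfl <;> rcases (hBsetmem g).1 hg with hg' | rfl
      · exact hauto.2 f (htmem f hf').1 g (htmem g hg').1 hfg
      · exact hred f (htmem f hf').1
      · -- g ∈ t is reduced with respect to ct
        intro v hv
        have hvu : v = u := leader_unique hrank hv hctlead
        subst hvu
        obtain ⟨hg𝒞, hrkg⟩ := htmem g hg'
        obtain ⟨vg, vc', hvg, hvc', hcase⟩ := hrkg
        have hvcu : vc' = v := leader_unique hrank hvc' hctlead
        rw [hvcu] at hcase
        have hshift : ∀ φ : Fin M → ℕ, φ ≠ 0 → shiftVar v φ ∉ g.vars := by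
          intro φ hφ hmem
          have h1 : lt v (shiftVar v φ) := lt_shiftVar hrank v φ hφ
          have h2 : lt v vg := by
            by_cases h : shiftVar v φ = vg
            · rw [← h]; exact h1
            · exact hrank.trans _ _ _ h1 (hvg.2 _ hmem h)
          rcases hcase with h3 | ⟨h3, _⟩
          · exact hrank.irrefl v (hrank.trans _ _ _ h2 h3)
          · rw [h3] at h2; exact hrank.irrefl v h2
        refine ⟨?_, ?_⟩
        · intro φ hφ
          exact hshift φ (hdeltane φ hφ)
        · intro φ _
          by_cases hφ0 : φ = 0
          · subst hφ0; rw [shiftVar_zero]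
            rcases hcase with h3 | ⟨h3, h4⟩
            · have hnot : v ∉ g.vars := by
                intro hmem
                by_cases h : v = vg
                · subst h; exact hrank.irrefl v h3
                · exact hrank.irrefl v (hrank.trans _ _ _ (hvg.2 v hmem h) h3)
              rw [degreeOf_eq_zero_of_not_mem_vars hnot]
              exact hctdpos
            · rw [← h3] at h4 ⊢; exact h4
          · rw [degreeOf_eq_zero_of_not_mem_vars (hshift φ hφ0)]
            exact hctdpos
      · exact absurd rfl hfg
  -- B ⊆ I
  have hBsub : (B : Set (MvPolynomial (DVar n M) R)) ⊆ (I : Set (MvPolynomial (DVar n M) R)) := by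
    intro f hf
    rcases (hBsetmem f).1 hf with hf' | rfl
    · exact hsub ((htmem f hf').1)
    · exact hctI
  -- separants of B avoid I
  have hBsep : ∀ f ∈ B, ∀ v : DVar n M, IsLeader lt f v → pderiv v f ∉ I := by
    intro f hf v hv
    rcases (hBmem f).1 hf with hf' | rfl
    · exact hsep f (htmem f hf').1 v hv
    · rw [leader_unique hrank hv hctlead]; exact hpdct
  -- B precedes 𝒞 : contradiction with minimality
  apply hmin B hBauto hBsub hBsep
  refine ⟨la, lb, hland, hlbnd, fun f => List.mem_toFinset.symm, hlbmem, hlapw, hlbpw, ?_⟩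
  left
  refine ⟨t.length, by simp [hladef], hklb, ?_, ?_⟩
  · rw [hgetla, hgetlb]
    exact hRkctb₀
  · intro j hj
    obtain ⟨heq, hmem𝒞⟩ := hgetpre j hj
    rw [← heq]
    obtain ⟨v, hv⟩ := hleadC _ hmem𝒞
    exact RkEq_refl hrank hv
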